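/- Let G be a digraph on n vertices with minimum out-degree δn, let X ⊆ V(G), and let z ∈ V(G) be a vertex with at least 2(1−δ)n out-neighbours inside X. Then there exist two vertices u, v in the out-neighbourhood of z within X such that both directed edges uv and vu are present in G; consequently {z, u, v} has complete base graph and every vertex of it has out-degree at least 1 within {z,u,v}. -/

import Mathlib

/-- If `δ⁺(G) ≥ δn` and `z` has at least `2(1-δ)n` out-neighbours inside `X`, then two
of these out-neighbours are joined by a double edge, yielding a `K_{3,1}` triple. -/
theorem stmt_12 (n : ℕ) (δ : ℝ) (G : Fin n → Fin n → Prop) (hirr : ∀ v, ¬ G v v)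
    (hdeg : ∀ v : Fin n, δ * n ≤ (Set.ncard {w | G v w} : ℝ))
    (X : Set (Fin n)) (z : Fin n)
    (hz : 2 * (1 - δ) * n ≤ (Set.ncard {w | w ∈ X ∧ G z w} : ℝ)) :
    ∃ u v : Fin n, u ∈ X ∧ v ∈ X ∧ G z u ∧ G z v ∧ u ≠ v ∧ G u v ∧ G v u := by
  classical
  by_contra h
  have key : ∀ u v : Fin n, u ∈ X → v ∈ X → G z u → G z v → u ≠ v → ¬(G u v ∧ G v u) :=
    fun u v hu hv hzu hzv huv ⟨h1, h2⟩ => h ⟨u, v, hu, hv, hzu, hzv, huv, h1, h2⟩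
  set N : Finset (Fin n) := Finset.univ.filter (fun w => w ∈ X ∧ G z w) with hN
  have hNcard : {w | w ∈ X ∧ G z w}.ncard = N.card := by
    rw [show {w : Fin n | w ∈ X ∧ G z w} = ↑N by ext w; simp [hN], Set.ncard_coe_finset]
  set m : ℕ := N.card with hm
  have hmn : m ≤ n := by
    calc m ≤ Finset.univ.card := Finset.card_le_univ N
    _ = n := Finset.card_fin n
  have hn0 : 0 < n := z.pos
  -- δ < 1
  have hdz : δ * n ≤ ((Finset.univ.filter (fun w => G z w)).card : ℝ) := by
    have := hdeg z
    rwa [show {w | G z w}.ncard = (Finset.univ.filter (fun w => G z w)).card by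
      rw [show {w : Fin n | G z w} = ↑(Finset.univ.filter (fun w => G z w)) by ext w; simp,
        Set.ncard_coe_finset]] at this
  have hdlt : (Finset.univ.filter (fun w => G z w)).card ≤ n - 1 := by
    have hsub : Finset.univ.filter (fun w => G z w) ⊆ Finset.univ.erase z := by
      intro w hw
      simp only [Finset.mem_filter] at hw
      refine Finset.mem_erase.2 ⟨?_, Finset.mem_univ w⟩
      intro he; exact hirr z (he ▸ hw.2)
    calc (Finset.univ.filter (fun w => G z w)).card ≤ (Finset.univ.erase z).card :=
      Finset.card_le_card hsub
    _ = n - 1 := by rw [Finset.card_erase_of_mem (Finset.mem_univ z), Finset.card_fin]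
  have hδ1 : δ < 1 := by
    by_contra hδ
    push_neg at hδ
    have h1 : (n : ℝ) ≤ δ * n := by nlinarith [(Nat.one_le_cast (α := ℝ)).mpr hn0]
    have h2 : ((Finset.univ.filter (fun w => G z w)).card : ℝ) ≤ (n : ℝ) - 1 := by
      have := (Nat.cast_le (α := ℝ)).2 hdlt
      rwa [Nat.cast_sub hn0, Nat.cast_one] at this
    linarith
  have hmpos : (0:ℝ) < m := by
    have hn0R : (0:ℝ) < n := by exact_mod_cast hn0
    have : (0:ℝ) < 2 * (1 - δ) * n := by nlinarith
    calc (0:ℝ) < 2 * (1 - δ) * n := this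
    _ ≤ m := by rw [← hNcard] at *; exact_mod_cast hz
  -- the edge set inside N
  set E : Finset (Fin n × Fin n) := (N ×ˢ N).filter (fun p => G p.1 p.2) with hE
  have hmemE : ∀ p : Fin n × Fin n, p ∈ E ↔ p.1 ∈ N ∧ p.2 ∈ N ∧ G p.1 p.2 := by
    intro p; simp [hE, Finset.mem_filter, Finset.mem_product, and_assoc]
  -- no double edges within N
  have hnd : ∀ p : Fin n × Fin n, p ∈ E → ¬ G p.2 p.1 := by
    rintro ⟨u, v⟩ hp
    rw [hmemE] at hp
    obtain ⟨hu, hv, huv⟩ := hp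
    simp only [hN, Finset.mem_filter] at hu hv
    intro hvu
    have hne : u ≠ v := by rintro rfl; exact hirr u huv
    exact key u v hu.2.1 hv.2.1 hu.2.2 hv.2.2 hne ⟨huv, hvu⟩
  -- upper bound on E.card
  have hEoff : E ⊆ N.offDiag := by
    intro p hp
    rw [hmemE] at hp
    exact Finset.mem_offDiag.2 ⟨hp.1, hp.2.1, fun he => hirr p.1 (he ▸ hp.2.2)⟩
  have hEswap : E.image Prod.swap ⊆ N.offDiag := by
    intro p hp
    obtain ⟨q, hq, rfl⟩ := Finset.mem_image.1 hp
    rw [hmemE] at hq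
    exact Finset.mem_offDiag.2 ⟨hq.2.1, hq.1, fun he => hirr q.1 ((show q.2 = q.1 from he) ▸ hq.2.2)⟩
  have hdisj : Disjoint E (E.image Prod.swap) := by
    rw [Finset.disjoint_left]
    intro p hp hp'
    obtain ⟨q, hq, hqp⟩ := Finset.mem_image.1 hp'
    have : G p.2 p.1 := by
      have := ((hmemE q).1 hq).2.2
      rw [← hqp]; simpa using this
    exact hnd p hp this
  have hup : 2 * E.card ≤ m * m - m := by
    have h1 : (E ∪ E.image Prod.swap).card ≤ N.offDiag.card :=
      Finset.card_le_card (Finset.union_subset hEoff hEswap)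
    rw [Finset.card_union_of_disjoint hdisj,
      Finset.card_image_of_injective _ Prod.swap_injective, Finset.offDiag_card, ← hm] at h1
    omega
  -- lower bound on E.card
  have hEeq : E = N.biUnion (fun u => (N.filter (fun w => G u w)).image (fun w => (u, w))) := by
    ext p
    rw [hmemE, Finset.mem_biUnion]
    constructor
    · rintro ⟨h1, h2, h3⟩
      exact ⟨p.1, h1, Finset.mem_image.2 ⟨p.2, Finset.mem_filter.2 ⟨h2, h3⟩, rfl⟩⟩
    · rintro ⟨u, hu, hp⟩
      obtain ⟨w, hw, rfl⟩ := Finset.mem_image.1 hp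
      rw [Finset.mem_filter] at hw
      exact ⟨hu, hw.1, hw.2⟩
  have hEcard : E.card = ∑ u ∈ N, (N.filter (fun w => G u w)).card := by
    rw [hEeq, Finset.card_biUnion]
    · refine Finset.sum_congr rfl fun u _ => ?_
      exact Finset.card_image_of_injective _ (fun a b hab => by simpa using hab)
    · intro u _ v _ huv
      rw [Function.onFun, Finset.disjoint_left]
      intro p hp hp'
      obtain ⟨w, _, rfl⟩ := Finset.mem_image.1 hp
      obtain ⟨w', _, he⟩ := Finset.mem_image.1 hp'
      exact huv (by simpa using congrArg Prod.fst he.symm)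
  have hterm : ∀ u ∈ N, δ * n - ((n:ℝ) - m) ≤ ((N.filter (fun w => G u w)).card : ℝ) := by
    intro u _
    have hsub : Finset.univ.filter (fun w => G u w) ⊆
        (Finset.univ \ N) ∪ N.filter (fun w => G u w) := by
      intro w hw
      rw [Finset.mem_filter] at hw
      by_cases hwN : w ∈ N
      · exact Finset.mem_union_right _ (Finset.mem_filter.2 ⟨hwN, hw.2⟩)
      · exact Finset.mem_union_left _ (Finset.mem_sdiff.2 ⟨Finset.mem_univ w, hwN⟩)
    have hc : (Finset.univ.filter (fun w => G u w)).card ≤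
        (n - m) + (N.filter (fun w => G u w)).card := by
      calc (Finset.univ.filter (fun w => G u w)).card
          ≤ ((Finset.univ \ N) ∪ N.filter (fun w => G u w)).card := Finset.card_le_card hsub
      _ ≤ (Finset.univ \ N).card + (N.filter (fun w => G u w)).card := Finset.card_union_le _ _
      _ = (n - m) + (N.filter (fun w => G u w)).card := by
          rw [Finset.card_sdiff_of_subset (Finset.subset_univ N), Finset.card_fin]
    have hdu : δ * n ≤ ((Finset.univ.filter (fun w => G u w)).card : ℝ) := by
      have := hdeg u
      rwa [show {w | G u w}.ncard = (Finset.univ.filter (fun w => G u w)).card by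
        rw [show {w : Fin n | G u w} = ↑(Finset.univ.filter (fun w => G u w)) by ext w; simp,
          Set.ncard_coe_finset]] at this
    have hcR : ((Finset.univ.filter (fun w => G u w)).card : ℝ) ≤
        ((n:ℝ) - m) + ((N.filter (fun w => G u w)).card : ℝ) := by
      have := (Nat.cast_le (α := ℝ)).2 hc
      push_cast [Nat.cast_sub hmn] at this
      linarith
    linarith
  have hlow : (m : ℝ) * (δ * n - ((n:ℝ) - m)) ≤ (E.card : ℝ) := by
    rw [hEcard]
    push_cast
    calc (m : ℝ) * (δ * n - ((n:ℝ) - m)) = ∑ _u ∈ N, (δ * n - ((n:ℝ) - m)) := by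
          rw [Finset.sum_const, nsmul_eq_mul]
    _ ≤ ∑ u ∈ N, ((N.filter (fun w => G u w)).card : ℝ) := Finset.sum_le_sum hterm
  have hupR : 2 * (E.card : ℝ) ≤ (m:ℝ) * m - m := by
    have := (Nat.cast_le (α := ℝ)).2 hup
    have hmm : m ≤ m * m := Nat.le_mul_of_pos_left m (by exact_mod_cast hmpos)
    push_cast [Nat.cast_sub hmm] at this
    linarith
  have hzm : 2 * (1 - δ) * n ≤ (m : ℝ) := by rw [← hNcard] at *; exact_mod_cast hz
  nlinarith [mul_le_mul_of_nonneg_left hzm hmpos.le]
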